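/- (Proposition 2, optimality of reverse water-filling) Let K ≥ 1, let λ_1^J,…,λ_K^J > 0, and let λ > 0. Define B = Σ_{k=1}^K log⁺(λ_k^J / λ) and D = Σ_{k=1}^K min{λ, λ_k^J}. Then: (i) for every d_1,…,d_K > 0 satisfying Σ_{k=1}^K log⁺(λ_k^J / d_k) ≤ B, one has Σ_{k=1}^K d_k ≥ D; and (ii) the choice d_k = min{λ, λ_k^J} for all k satisfies Σ_{k=1}^K log⁺(λ_k^J / d_k) = B and Σ_{k=1}^K d_k = D. Hence D is the optimal value of the problem: minimize Σ_k d_k over d_1,…,d_K > 0 subject to Σ_k log⁺(λ_k^J / d_k) ≤ B. -/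
import Mathlib

/-- Per-coordinate key inequality in natural-log form. -/
lemma rwf_log_key (a lam d : ℝ) (ha : 0 < a) (hlam : 0 < lam) (hd : 0 < d) :
    max 0 (Real.log (a/lam)) - max 0 (Real.log (a/d)) ≤ (d - min lam a)/lam := by
  rcases le_or_gt a lam with h1 | h1
  · rw [min_eq_right h1]
    have hmax1 : max 0 (Real.log (a/lam)) = 0 :=
      max_eq_left (Real.log_nonpos (by positivity) (div_le_one_of_le₀ h1 hlam.le))
    rw [hmax1, zero_sub]
    rcases le_or_gt a d with h2 | h2
    · have hr : (0:ℝ) ≤ (d - a)/lam := div_nonneg (by linarith) hlam.le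
      linarith [le_max_left 0 (Real.log (a/d))]
    · have hmax2 : max 0 (Real.log (a/d)) = Real.log (a/d) :=
        max_eq_right (Real.log_nonneg (by rw [le_div_iff₀ hd]; linarith))
      rw [hmax2]
      have hlog : -Real.log (a/d) = Real.log (d/a) := by
        rw [← Real.log_inv]; congr 1; field_simp
      rw [hlog]
      have hle : Real.log (d/a) ≤ d/a - 1 := Real.log_le_sub_one_of_pos (by positivity)
      have h3 : d/a - 1 = (d-a)/a := by field_simp
      have h4 : (d-a)/a ≤ (d-a)/lam := by
        rw [div_le_div_iff₀ ha hlam]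
        nlinarith
      linarith
  · rw [min_eq_left h1.le]
    have hmax1 : max 0 (Real.log (a/lam)) = Real.log (a/lam) :=
      max_eq_right (Real.log_nonneg (by rw [le_div_iff₀ hlam]; linarith))
    rw [hmax1]
    rcases le_or_gt a d with h2 | h2
    · have h3 : Real.log (a/lam) ≤ a/lam - 1 := Real.log_le_sub_one_of_pos (by positivity)
      have h4 : a/lam ≤ d/lam := by gcongr
      have heq : (d - lam)/lam = d/lam - 1 := by field_simp
      linarith [le_max_left 0 (Real.log (a/d))]
    · have hmax2 : max 0 (Real.log (a/d)) = Real.log (a/d) :=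
        max_eq_right (Real.log_nonneg (by rw [le_div_iff₀ hd]; linarith))
      rw [hmax2]
      have heq : Real.log (a/lam) - Real.log (a/d) = Real.log (d/lam) := by
        rw [Real.log_div ha.ne' hlam.ne', Real.log_div ha.ne' hd.ne',
          Real.log_div hd.ne' hlam.ne']
        ring
      rw [heq]
      have h3 : Real.log (d/lam) ≤ d/lam - 1 := Real.log_le_sub_one_of_pos (by positivity)
      have h4 : d/lam - 1 = (d - lam)/lam := by field_simp
      linarith

/-- Per-coordinate key inequality in `logb 2` form. -/
lemma rwf_logb_key (a lam d : ℝ) (ha : 0 < a) (hlam : 0 < lam) (hd : 0 < d) :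
    max 0 (Real.logb 2 (a/lam)) - max 0 (Real.logb 2 (a/d))
      ≤ (d - min lam a)/(lam * Real.log 2) := by
  have hL : (0:ℝ) < Real.log 2 := Real.log_pos one_lt_two
  have hmb : ∀ x : ℝ, max 0 (Real.logb 2 x) = max 0 (Real.log x) / Real.log 2 := by
    intro x
    rw [Real.logb, ← max_div_div_right hL.le, zero_div]
  rw [hmb, hmb, div_sub_div_same]
  have h := rwf_log_key a lam d ha hlam hd
  rw [show (d - min lam a)/(lam * Real.log 2) = ((d - min lam a)/lam)/Real.log 2 by
    field_simp]
  gcongr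

/-- **Proposition 2 (optimality of reverse water-filling).**
With `log⁺ x = max 0 (logb 2 x)`, `B = Σ_k log⁺(λ_k^J / λ)` and `D = Σ_k min {λ, λ_k^J}`:
(i) every `d : Fin K → ℝ` with `d_k > 0` and `Σ_k log⁺(λ_k^J / d_k) ≤ B` satisfies
`Σ_k d_k ≥ D`; (ii) the choice `d_k = min {λ, λ_k^J}` meets the rate constraint with
equality and has sum `D`; hence `D` is the optimal value of the reverse water-filling
problem, expressed as an `IsLeast` statement. -/
theorem reverse_waterfilling_optimality
    (K : ℕ) (hK : 1 ≤ K) (lamJ : Fin K → ℝ) (hJ : ∀ k, 0 < lamJ k)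
    (lam : ℝ) (hlam : 0 < lam) :
    (∀ dv : Fin K → ℝ, (∀ k, 0 < dv k) →
        (∑ k, max 0 (Real.logb 2 (lamJ k / dv k)))
          ≤ (∑ k, max 0 (Real.logb 2 (lamJ k / lam))) →
        (∑ k, min lam (lamJ k)) ≤ ∑ k, dv k) ∧
    ((∑ k, max 0 (Real.logb 2 (lamJ k / min lam (lamJ k))))
        = (∑ k, max 0 (Real.logb 2 (lamJ k / lam)))) ∧
    IsLeast {t : ℝ | ∃ dv : Fin K → ℝ, (∀ k, 0 < dv k) ∧
        (∑ k, max 0 (Real.logb 2 (lamJ k / dv k)))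
          ≤ (∑ k, max 0 (Real.logb 2 (lamJ k / lam))) ∧
        t = ∑ k, dv k}
      (∑ k, min lam (lamJ k)) := by
  have hL : (0:ℝ) < Real.log 2 := Real.log_pos one_lt_two
  have part1 : ∀ dv : Fin K → ℝ, (∀ k, 0 < dv k) →
      (∑ k, max 0 (Real.logb 2 (lamJ k / dv k)))
        ≤ (∑ k, max 0 (Real.logb 2 (lamJ k / lam))) →
      (∑ k, min lam (lamJ k)) ≤ ∑ k, dv k := by
    intro dv hdv hcon
    have hsum : ∑ k, (max 0 (Real.logb 2 (lamJ k / lam))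
        - max 0 (Real.logb 2 (lamJ k / dv k)))
        ≤ ∑ k, (dv k - min lam (lamJ k))/(lam * Real.log 2) :=
      Finset.sum_le_sum fun k _ => rwf_logb_key (lamJ k) lam (dv k) (hJ k) hlam (hdv k)
    rw [Finset.sum_sub_distrib] at hsum
    have h0 : (0:ℝ) ≤ ∑ k, (dv k - min lam (lamJ k))/(lam * Real.log 2) := by
      linarith
    rw [← Finset.sum_div, Finset.sum_sub_distrib, le_div_iff₀ (by positivity)] at h0
    linarith
  have part2 : ∀ k, max 0 (Real.logb 2 (lamJ k / min lam (lamJ k)))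
      = max 0 (Real.logb 2 (lamJ k / lam)) := by
    intro k
    rcases le_total lam (lamJ k) with h | h
    · rw [min_eq_left h]
    · rw [min_eq_right h, div_self (hJ k).ne', Real.logb_one, max_self]
      symm
      apply max_eq_left
      exact Real.logb_nonpos one_lt_two (div_nonneg (hJ k).le hlam.le) (div_le_one_of_le₀ h hlam.le)
  have part2' : (∑ k, max 0 (Real.logb 2 (lamJ k / min lam (lamJ k))))
      = (∑ k, max 0 (Real.logb 2 (lamJ k / lam))) :=
    Finset.sum_congr rfl fun k _ => part2 k
  refine ⟨part1, part2', ⟨⟨fun k => min lam (lamJ k), fun k => lt_min hlam (hJ k),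
    le_of_eq part2', rfl⟩, ?_⟩⟩
  rintro t ⟨dv, hdv, hcon, rfl⟩
  exact part1 dv hdv hcon
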